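/- Invariance Theorem for harmonic conjugates: Let A and B be distinct points and C a point on the line AB. Suppose (l,R) and (l',R') are two auxiliary selections, where l is a line through C with l ≠ AB and R is a point outside both AB and l, and likewise l' is a line through C with l' ≠ AB and R' is a point outside both AB and l'. Set P = BR·l, Q = AR·l, S = AP·BQ, D = AB·RS, and analogously P' = BR'·l', Q' = AR'·l', S' = A P'·B Q', D' = AB·R'S' (all indicated joins and intersections exist and are unique). Then D = D'; the harmonic conjugate construction is independent of the choice of auxiliary elements. -/
import Mathlib


open Configuration

variable (P L : Type*) [Membership P L]

/-- Three points are collinear if some line passes through all three. -/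
def Col (A B C : P) : Prop := ∃ l : L, A ∈ l ∧ B ∈ l ∧ C ∈ l

/-- Every line of `L` is incident with at least `n` distinct points. -/
def LinesHaveAtLeast (n : ℕ) : Prop :=
  ∀ l : L, ∃ s : Finset P, n ≤ s.card ∧ ∀ X ∈ s, X ∈ l

/-- `IsTriangle A B C ab bc ca` : the points `A B C` form a triangle with sides
`ab = AB`, `bc = BC`, `ca = CA`; noncollinearity is expressed by each vertex
lying outside the opposite side. -/
def IsTriangle (A B C : P) (ab bc ca : L) : Prop :=
  A ∈ ab ∧ B ∈ ab ∧ B ∈ bc ∧ C ∈ bc ∧ C ∈ ca ∧ A ∈ ca ∧ A ∉ bc ∧ B ∉ ca ∧ C ∉ ab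

/-- Two triangles are distinct if corresponding vertices are distinct and
corresponding sides are distinct. -/
def DistinctTriangles (A B C A' B' C' : P) (ab bc ca ab' bc' ca' : L) : Prop :=
  A ≠ A' ∧ B ≠ B' ∧ C ≠ C' ∧ ab ≠ ab' ∧ bc ≠ bc' ∧ ca ≠ ca'

/-- Two triangles are perspective from the center `O` : the lines joining
corresponding vertices are concurrent at `O`, and `O` lies outside each of the
six sides. -/
def PerspectiveFromCenter (A B C A' B' C' : P) (ab bc ca ab' bc' ca' : L) (O : P) : Prop :=
  (∃ la : L, A ∈ la ∧ A' ∈ la ∧ O ∈ la) ∧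
  (∃ lb : L, B ∈ lb ∧ B' ∈ lb ∧ O ∈ lb) ∧
  (∃ lc : L, C ∈ lc ∧ C' ∈ lc ∧ O ∈ lc) ∧
  O ∉ ab ∧ O ∉ bc ∧ O ∉ ca ∧ O ∉ ab' ∧ O ∉ bc' ∧ O ∉ ca'

/-- Two triangles are perspective from the axis `l` : the intersection points of
corresponding sides lie on `l`, and `l` avoids each of the six vertices. -/
def PerspectiveFromAxis (A B C A' B' C' : P) (ab bc ca ab' bc' ca' : L) (l : L) : Prop :=
  (∃ X : P, X ∈ ab ∧ X ∈ ab' ∧ X ∈ l) ∧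
  (∃ Y : P, Y ∈ bc ∧ Y ∈ bc' ∧ Y ∈ l) ∧
  (∃ Z : P, Z ∈ ca ∧ Z ∈ ca' ∧ Z ∈ l) ∧
  A ∉ l ∧ B ∉ l ∧ C ∉ l ∧ A' ∉ l ∧ B' ∉ l ∧ C' ∉ l

/-- Desargues's property: two distinct triangles that are perspective from a
center are perspective from an axis. -/
def DesarguesProperty : Prop :=
  ∀ (A B C A' B' C' : P) (ab bc ca ab' bc' ca' : L) (O : P),
    IsTriangle P L A B C ab bc ca → IsTriangle P L A' B' C' ab' bc' ca' →
    DistinctTriangles P L A B C A' B' C' ab bc ca ab' bc' ca' →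
    PerspectiveFromCenter P L A B C A' B' C' ab bc ca ab' bc' ca' O →
    ∃ l : L, PerspectiveFromAxis P L A B C A' B' C' ab bc ca ab' bc' ca' l

open Configuration.HasPoints (mkPoint mkPoint_ax)
open Configuration.HasLines (mkLine mkLine_ax)

set_option linter.unusedSectionVars false

section Harm

variable {Pt Ln : Type*} [Membership Pt Ln] [Configuration.ProjectivePlane Pt Ln]


lemma u_pt {l m : Ln} (h : l ≠ m) {p q : Pt} (hpl : p ∈ l) (hpm : p ∈ m)
    (hql : q ∈ l) (hqm : q ∈ m) : p = q :=
  (Configuration.Nondegenerate.eq_or_eq hpl hql hpm hqm).resolve_right h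

lemma u_ln {p q : Pt} (h : p ≠ q) {l m : Ln} (hpl : p ∈ l) (hql : q ∈ l)
    (hpm : p ∈ m) (hqm : q ∈ m) : l = m :=
  (Configuration.Nondegenerate.eq_or_eq hpl hql hpm hqm).resolve_left h

lemma col_mem {X Y Z : Pt} (h : Col Pt Ln X Y Z) (hXY : X ≠ Y) {m : Ln}
    (hX : X ∈ m) (hY : Y ∈ m) : Z ∈ m := by
  obtain ⟨n, h1, h2, h3⟩ := h
  exact (u_ln hXY h1 h2 hX hY) ▸ h3

/-- All the facts we need about a single harmonic-conjugate configuration. -/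
structure CfgF (A B C : Pt) (ab : Ln) where
  l : Ln
  R : Pt
  Pp : Pt
  Q : Pt
  S : Pt
  D : Pt
  a : Ln
  b : Ln
  ap : Ln
  bq : Ln
  rs : Ln
  hCl : C ∈ l
  hlab : l ≠ ab
  hRab : R ∉ ab
  hRl : R ∉ l
  hAl : A ∉ l
  hBl : B ∉ l
  hPl : Pp ∈ l
  hQl : Q ∈ l
  haA : A ∈ a
  haR : R ∈ a
  haQ : Q ∈ a
  hbB : B ∈ b
  hbR : R ∈ b
  hbP : Pp ∈ b
  hapA : A ∈ ap
  hapP : Pp ∈ ap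
  hapS : S ∈ ap
  hbqB : B ∈ bq
  hbqQ : Q ∈ bq
  hbqS : S ∈ bq
  hrsR : R ∈ rs
  hrsS : S ∈ rs
  hrsD : D ∈ rs
  hDab : D ∈ ab
  hPab : Pp ∉ ab
  hQab : Q ∉ ab
  hSab : S ∉ ab
  hPC : Pp ≠ C
  hQC : Q ≠ C
  hPQ : Pp ≠ Q
  hPR : Pp ≠ R
  hQR : Q ≠ R
  hSP : S ≠ Pp
  hSQ : S ≠ Q
  hSR : S ≠ R
  hQrs : Q ∉ rs
  hRbq : R ∉ bq
  hSa : S ∉ a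

/-- Derive all standard facts of one configuration from the raw construction data. -/
noncomputable def mkCfgF {A B C : Pt} {ab : Ln}
    (hAB : A ≠ B) (hA : A ∈ ab) (hB : B ∈ ab) (hC : C ∈ ab)
    (hCA : C ≠ A) (hCB : C ≠ B)
    (l : Ln) (hCl : C ∈ l) (hlab : l ≠ ab)
    (R : Pt) (hRab : R ∉ ab) (hRl : R ∉ l)
    (Pp : Pt) (hP1 : Pp ∈ l) (hP2 : Col Pt Ln B R Pp)
    (Q : Pt) (hQ1 : Q ∈ l) (hQ2 : Col Pt Ln A R Q)
    (S : Pt) (hS1 : Col Pt Ln A Pp S) (hS2 : Col Pt Ln B Q S)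
    (D : Pt) (hD1 : D ∈ ab) (hD2 : Col Pt Ln R S D) :
    CfgF A B C ab := by
  have hAl : A ∉ l := fun h => hlab (u_ln hCA hCl h hC hA)
  have hBl : B ∉ l := fun h => hlab (u_ln hCB hCl h hC hB)
  have hAR : A ≠ R := fun h => hRab (h ▸ hA)
  have hBR : B ≠ R := fun h => hRab (h ▸ hB)
  set a : Ln := mkLine hAR with ha_def
  have haA : A ∈ a := (mkLine_ax hAR).1
  have haR : R ∈ a := (mkLine_ax hAR).2
  set b : Ln := mkLine hBR with hb_def
  have hbB : B ∈ b := (mkLine_ax hBR).1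
  have hbR : R ∈ b := (mkLine_ax hBR).2
  have haQ : Q ∈ a := col_mem hQ2 hAR haA haR
  have hbP : Pp ∈ b := col_mem hP2 hBR hbB hbR
  have hQR : Q ≠ R := fun h => hRl (h ▸ hQ1)
  have hPR : Pp ≠ R := fun h => hRl (h ▸ hP1)
  have hQA : Q ≠ A := fun h => hAl (h ▸ hQ1)
  have hPB : Pp ≠ B := fun h => hBl (h ▸ hP1)
  have hPC : Pp ≠ C := fun h => hRab ((u_ln hCB.symm hbB (h ▸ hbP) hB hC) ▸ hbR)
  have hQC : Q ≠ C := fun h => hRab ((u_ln hCA.symm haA (h ▸ haQ) hA hC) ▸ haR)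
  have hPab : Pp ∉ ab := fun h => hPC (u_pt hlab hP1 h hCl hC)
  have hQab : Q ∉ ab := fun h => hQC (u_pt hlab hQ1 h hCl hC)
  have hab' : a ≠ b := fun h => hRab ((u_ln hAB haA (h.symm ▸ hbB) hA hB) ▸ haR)
  have hPQ : Pp ≠ Q := fun h => hQR (u_pt hab' haQ (h ▸ hbP) haR hbR)
  have hAP : A ≠ Pp := fun h => hAl (h ▸ hP1)
  have hBQ : B ≠ Q := fun h => hBl (h ▸ hQ1)
  set ap : Ln := mkLine hAP with hap_def
  have hapA : A ∈ ap := (mkLine_ax hAP).1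
  have hapP : Pp ∈ ap := (mkLine_ax hAP).2
  have hapS : S ∈ ap := col_mem hS1 hAP hapA hapP
  set bq : Ln := mkLine hBQ with hbq_def
  have hbqB : B ∈ bq := (mkLine_ax hBQ).1
  have hbqQ : Q ∈ bq := (mkLine_ax hBQ).2
  have hbqS : S ∈ bq := col_mem hS2 hBQ hbqB hbqQ
  have hap_ab : ap ≠ ab := fun h => hPab (h ▸ hapP)
  have hbq_ab : bq ≠ ab := fun h => hQab (h ▸ hbqQ)
  have hSab : S ∉ ab := fun h =>
    hAB ((u_pt hap_ab hapS h hapA hA) ▸ (u_pt hbq_ab hbqS h hbqB hB))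
  have hSA : S ≠ A := fun h => hSab (h ▸ hA)
  have hPa : Pp ∉ a := fun h => hPR (u_pt hab' h hbP haR hbR)
  have ha_ap : a ≠ ap := fun h => hPa (h.symm ▸ hapP)
  have hSa : S ∉ a := fun h => hSA (u_pt ha_ap h hapS haA hapA)
  have hbql : bq ≠ l := fun hh => hBl (hh ▸ hbqB)
  have hapl : ap ≠ l := fun hh => hAl (hh ▸ hapA)
  have hSP : S ≠ Pp := fun h => hPQ (u_pt hbql (h ▸ hbqS) hP1 hbqQ hQ1)
  have hSQ : S ≠ Q := fun h => hPQ ((u_pt hapl (h ▸ hapS) hQ1 hapP hP1).symm)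
  have hSR : S ≠ R := fun h => hSa (h.symm ▸ haR)
  have hRS : R ≠ S := fun h => hSR h.symm
  set rs : Ln := mkLine hRS with hrs_def
  have hrsR : R ∈ rs := (mkLine_ax hRS).1
  have hrsS : S ∈ rs := (mkLine_ax hRS).2
  have hrsD : D ∈ rs := col_mem hD2 hRS hrsR hrsS
  have hQrs : Q ∉ rs := fun h => hSa ((u_ln hQR h hrsR haQ haR) ▸ hrsS)
  have hRbq : R ∉ bq := fun h =>
    hRab ((u_ln hAB haA ((u_ln hQR hbqQ h haQ haR) ▸ hbqB) hA hB) ▸ haR)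
  exact ⟨l, R, Pp, Q, S, D, a, b, ap, bq, rs, hCl, hlab, hRab, hRl, hAl, hBl,
    hP1, hQ1, haA, haR, haQ, hbB, hbR, hbP, hapA, hapP, hapS, hbqB, hbqQ, hbqS,
    hrsR, hrsS, hrsD, hD1, hPab, hQab, hSab, hPC, hQC, hPQ, hPR, hQR, hSP, hSQ,
    hSR, hQrs, hRbq, hSa⟩

/-- Existential packaging of the derived lines of a configuration,
with no structure projections (to keep rewriting easy). -/
lemma cfg_lines {A B C : Pt} {ab : Ln}
    (hAB : A ≠ B) (hA : A ∈ ab) (hB : B ∈ ab) (hC : C ∈ ab)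
    (hCA : C ≠ A) (hCB : C ≠ B)
    (l : Ln) (hCl : C ∈ l) (hlab : l ≠ ab)
    (R : Pt) (hRab : R ∉ ab) (hRl : R ∉ l)
    (Pp : Pt) (hP1 : Pp ∈ l) (hP2 : Col Pt Ln B R Pp)
    (Q : Pt) (hQ1 : Q ∈ l) (hQ2 : Col Pt Ln A R Q)
    (S : Pt) (hS1 : Col Pt Ln A Pp S) (hS2 : Col Pt Ln B Q S)
    (D : Pt) (hD1 : D ∈ ab) (hD2 : Col Pt Ln R S D) :
    ∃ a b ap bq : Ln, A ∉ l ∧ B ∉ l ∧ Pp ∉ ab ∧ Q ∉ ab ∧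
      A ∈ a ∧ R ∈ a ∧ Q ∈ a ∧ B ∈ b ∧ R ∈ b ∧ Pp ∈ b ∧
      A ∈ ap ∧ Pp ∈ ap ∧ S ∈ ap ∧ B ∈ bq ∧ Q ∈ bq ∧ S ∈ bq := by
  let c := mkCfgF hAB hA hB hC hCA hCB l hCl hlab R hRab hRl Pp hP1 hP2 Q hQ1
    hQ2 S hS1 hS2 D hD1 hD2
  exact ⟨c.a, c.b, c.ap, c.bq, c.hAl, c.hBl, c.hPab, c.hQab, c.haA, c.haR,
    c.haQ, c.hbB, c.hbR, c.hbP, c.hapA, c.hapP, c.hapS, c.hbqB, c.hbqQ, c.hbqS⟩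

/-- The key Desargues-based lemma: two configurations over the same `A B C ab`
which are mutually generic produce the same harmonic conjugate. -/
theorem coreD {A B C : Pt} {ab : Ln}
    (hdes : DesarguesProperty Pt Ln)
    (hAB : A ≠ B) (hA : A ∈ ab) (hB : B ∈ ab) (hC : C ∈ ab)
    (hCA : C ≠ A) (hCB : C ≠ B)
    (f g : CfgF A B C ab)
    (G1 : f.l ≠ g.l)
    (G2 : ¬ Col Pt Ln A f.R g.R)
    (G3 : ¬ Col Pt Ln B f.R g.R)
    (G5 : ¬ Col Pt Ln A f.Pp g.Pp)
    (G6 : ¬ Col Pt Ln B f.Q g.Q) :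
    f.D = g.D := by
  obtain ⟨l, R, Pp, Q, S, D, a, b, ap, bq, rs, hCl, hlab, hRab, hRl, hAl, hBl,
    hPl, hQl, haA, haR, haQ, hbB, hbR, hbP, hapA, hapP, hapS, hbqB, hbqQ, hbqS,
    hrsR, hrsS, hrsD, hDab, hPab, hQab, hSab, hPC, hQC, hPQ, hPR, hQR, hSP, hSQ,
    hSR, hQrs, hRbq, hSa⟩ := f
  obtain ⟨l', R', Pp', Q', S', D', a', b', ap', bq', rs', hCl', hl'ab, hR'ab,
    hR'l', hAl', hBl', hP'l', hQ'l', ha'A, ha'R', ha'Q', hb'B, hb'R', hb'P',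
    hap'A, hap'P', hap'S', hbq'B, hbq'Q', hbq'S', hrs'R', hrs'S', hrs'D',
    hD'ab, hP'ab, hQ'ab, hS'ab, hP'C, hQ'C, hP'Q', hP'R', hQ'R', hS'P', hS'Q',
    hS'R', hQ'rs', hR'bq', hS'a'⟩ := g
  -- basic derived facts
  have hQA : Q ≠ A := fun h => hAl (h ▸ hQl)
  have hQ'A : Q' ≠ A := fun h => hAl' (h ▸ hQ'l')
  have hPB : Pp ≠ B := fun h => hBl (h ▸ hPl)
  have hP'B : Pp' ≠ B := fun h => hBl' (h ▸ hP'l')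
  have hSA : S ≠ A := fun h => hSab (h ▸ hA)
  have hS'A : S' ≠ A := fun h => hS'ab (h ▸ hA)
  have hSB : S ≠ B := fun h => hSab (h ▸ hB)
  have hS'B : S' ≠ B := fun h => hS'ab (h ▸ hB)
  -- cross facts
  have hPnl' : Pp ∉ l' := fun h => hPC (u_pt G1 hPl h hCl hCl')
  have hP'nl : Pp' ∉ l := fun h => hP'C (u_pt G1.symm hP'l' h hCl' hCl)
  have hQnl' : Q ∉ l' := fun h => hQC (u_pt G1 hQl h hCl hCl')
  have hQ'nl : Q' ∉ l := fun h => hQ'C (u_pt G1.symm hQ'l' h hCl' hCl)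
  have hPP' : Pp ≠ Pp' := fun h => hPnl' (h ▸ hP'l')
  have hQQ' : Q ≠ Q' := fun h => hQnl' (h ▸ hQ'l')
  have haa' : a ≠ a' := fun h => G2 ⟨a, haA, haR, h.symm ▸ ha'R'⟩
  have hbb' : b ≠ b' := fun h => G3 ⟨b, hbB, hbR, h.symm ▸ hb'R'⟩
  have hapap' : ap ≠ ap' := fun h => G5 ⟨ap, hapA, hapP, h.symm ▸ hap'P'⟩
  have hbqbq' : bq ≠ bq' := fun h => G6 ⟨bq, hbqB, hbqQ, h.symm ▸ hbq'Q'⟩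
  have hQna' : Q ∉ a' := fun h => hQA (u_pt haa' haQ h haA ha'A)
  have hQ'na : Q' ∉ a := fun h => hQ'A (u_pt haa'.symm ha'Q' h ha'A haA)
  have hPnb' : Pp ∉ b' := fun h => hPB (u_pt hbb' hbP h hbB hb'B)
  have hP'nb : Pp' ∉ b := fun h => hP'B (u_pt hbb'.symm hb'P' h hb'B hbB)
  have hRR' : R ≠ R' := fun h => G2 ⟨a, haA, haR, h ▸ haR⟩
  have hSS' : S ≠ S' := fun h =>
    hSab ((u_pt hbqbq' hbqS (h.symm ▸ hbq'S') hbqB hbq'B) ▸ hB)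
  set p : Ln := mkLine hPP' with hp_def
  have hpP : Pp ∈ p := (mkLine_ax hPP').1
  have hpP' : Pp' ∈ p := (mkLine_ax hPP').2
  set qq : Ln := mkLine hQQ' with hqq_def
  have hqqQ : Q ∈ qq := (mkLine_ax hQQ').1
  have hqqQ' : Q' ∈ qq := (mkLine_ax hQQ').2
  set rr : Ln := mkLine hRR' with hrr_def
  have hrrR : R ∈ rr := (mkLine_ax hRR').1
  have hrrR' : R' ∈ rr := (mkLine_ax hRR').2
  set ss : Ln := mkLine hSS' with hss_def
  have hssS : S ∈ ss := (mkLine_ax hSS').1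
  have hssS' : S' ∈ ss := (mkLine_ax hSS').2
  have hp_qq : p ≠ qq := fun h =>
    hP'nl ((u_ln hPQ hpP (h.symm ▸ hqqQ) hPl hQl) ▸ hpP')
  set O : Pt := mkPoint hp_qq with hO_def
  have hOp : O ∈ p := (mkPoint_ax hp_qq).1
  have hOqq : O ∈ qq := (mkPoint_ax hp_qq).2
  -- Step 1: Desargues on (Pp,Pp',B) and (Q,Q',A) from center C, giving O ∈ rr.
  have hCp : C ∉ p := fun h => hP'nl ((u_ln hPC hpP h hPl hCl) ▸ hpP')
  have hCqq : C ∉ qq := fun h => hQ'nl ((u_ln hQC hqqQ h hQl hCl) ▸ hqqQ')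
  have hCb : C ∉ b := fun h => hRab ((u_ln hCB.symm hbB h hB hC) ▸ hbR)
  have hCb' : C ∉ b' := fun h => hR'ab ((u_ln hCB.symm hb'B h hB hC) ▸ hb'R')
  have hCa : C ∉ a := fun h => hRab ((u_ln hCA.symm haA h hA hC) ▸ haR)
  have hCa' : C ∉ a' := fun h => hR'ab ((u_ln hCA.symm ha'A h hA hC) ▸ ha'R')
  have hb'a' : b' ≠ a' := fun h =>
    hR'ab ((u_ln hAB (h ▸ ha'A) hb'B hA hB) ▸ hb'R')
  have hba : b ≠ a := fun h => hRab ((u_ln hAB (h ▸ haA) hbB hA hB) ▸ hbR)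
  have hBp : B ∉ p := fun h => hP'nb ((u_ln hPB hpP h hbP hbB) ▸ hpP')
  have hAqq : A ∉ qq := fun h => hQ'na ((u_ln hQA hqqQ h haQ haA) ▸ hqqQ')
  have hOrr : O ∈ rr := by
    obtain ⟨ax1, ⟨X1, hX1p, hX1qq, hX1m⟩, ⟨Y1, hY1b', hY1a', hY1m⟩,
        ⟨Z1, hZ1b, hZ1a, hZ1m⟩, -, -, -, -, -, -⟩ :=
      hdes Pp Pp' B Q Q' A p b' b qq a' a C
        ⟨hpP, hpP', hb'P', hb'B, hbB, hbP, hPnb', hP'nb, hBp⟩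
        ⟨hqqQ, hqqQ', ha'Q', ha'A, haA, haQ, hQna', hQ'na, hAqq⟩
        ⟨hPQ, hP'Q', hAB.symm, hp_qq, hb'a', hba⟩
        ⟨⟨l, hPl, hQl, hCl⟩, ⟨l', hP'l', hQ'l', hCl'⟩, ⟨ab, hB, hA, hC⟩,
          hCp, hCb', hCb, hCqq, hCa', hCa⟩
    have hX1 : X1 = O := u_pt hp_qq hX1p hX1qq hOp hOqq
    have hY1 : Y1 = R' := u_pt hb'a' hY1b' hY1a' hb'R' ha'R'
    have hZ1 : Z1 = R := u_pt hba hZ1b hZ1a hbR haR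
    have hax1 : ax1 = rr := u_ln hRR' (hZ1 ▸ hZ1m) (hY1 ▸ hY1m) hrrR hrrR'
    exact hax1 ▸ (hX1 ▸ hX1m)
  -- Step 2: Desargues on (Pp,Pp',C) and (S,S',B) from center A, giving O ∈ ss.
  have hAp : A ∉ p := fun h => G5 ⟨p, h, hpP, hpP'⟩
  have hAss : A ∉ ss := fun h =>
    hS'A (u_pt hapap' ((u_ln hSA.symm h hssS hapA hapS) ▸ hssS') hap'S' hapA hap'A)
  have hSnbq' : S ∉ bq' := fun h => hSB (u_pt hbqbq' hbqS h hbqB hbq'B)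
  have hS'nbq : S' ∉ bq := fun h => hS'B (u_pt hbqbq'.symm hbq'S' h hbq'B hbqB)
  have hBss : B ∉ ss := fun h =>
    hS'nbq ((u_ln hSB.symm h hssS hbqB hbqS) ▸ hssS')
  have hp_ss : p ≠ ss := fun h =>
    G5 ⟨ap, hapA, hapP, (u_ln hSP (h ▸ hssS) hpP hapS hapP) ▸ hpP'⟩
  have hl'bq' : l' ≠ bq' := fun h => hBl' (h ▸ hbq'B)
  have hlbq : l ≠ bq := fun h => hBl (h ▸ hbqB)
  have hAbq' : A ∉ bq' := fun h => hQ'ab ((u_ln hAB h hbq'B hA hB) ▸ hbq'Q')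
  have hAbq : A ∉ bq := fun h => hQab ((u_ln hAB h hbqB hA hB) ▸ hbqQ)
  have hOss : O ∈ ss := by
    obtain ⟨ax2, ⟨X2, hX2p, hX2ss, hX2m⟩, ⟨Y2, hY2l', hY2bq', hY2m⟩,
        ⟨Z2, hZ2l, hZ2bq, hZ2m⟩, -, -, -, -, -, -⟩ :=
      hdes Pp Pp' C S S' B p l' l ss bq' bq A
        ⟨hpP, hpP', hP'l', hCl', hCl, hPl, hPnl', hP'nl, hCp⟩
        ⟨hssS, hssS', hbq'S', hbq'B, hbqB, hbqS, hSnbq', hS'nbq, hBss⟩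
        ⟨hSP.symm, hS'P'.symm, hCB, hp_ss, hl'bq', hlbq⟩
        ⟨⟨ap, hapP, hapS, hapA⟩, ⟨ap', hap'P', hap'S', hap'A⟩,
          ⟨ab, hC, hB, hA⟩, hAp, hAl', hAl, hAss, hAbq', hAbq⟩
    have hax2 : ax2 = qq :=
      u_ln hQQ' ((u_pt hlbq hZ2l hZ2bq hQl hbqQ) ▸ hZ2m)
        ((u_pt hl'bq' hY2l' hY2bq' hQ'l' hbq'Q') ▸ hY2m) hqqQ hqqQ'
    have hX2 : X2 = O := u_pt hp_qq hX2p (hax2 ▸ hX2m) hOp hOqq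
    exact hX2 ▸ hX2ss
  -- O avoids the relevant points and lines
  have hOR : O ≠ R := fun h => by
    have h1 : qq = a := u_ln hQR hqqQ (h ▸ hOqq) haQ haR
    exact hQ'A (u_pt haa' (h1 ▸ hqqQ') ha'Q' haA ha'A)
  have hOR' : O ≠ R' := fun h => by
    have h1 : qq = a' := u_ln hQ'R' hqqQ' (h ▸ hOqq) ha'Q' ha'R'
    exact hQA (u_pt haa'.symm (h1 ▸ hqqQ) haQ ha'A haA)
  have hOS : O ≠ S := fun h =>
    G5 ⟨ap, hapA, hapP, (u_ln hSP (h ▸ hOp) hpP hapS hapP) ▸ hpP'⟩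
  have hOS' : O ≠ S' := fun h =>
    G5 ⟨ap', hap'A, (u_ln hS'P' (h ▸ hOp) hpP' hap'S' hap'P') ▸ hpP, hap'P'⟩
  have hOQ : O ≠ Q := fun h =>
    hP'nl ((u_ln hPQ hpP (h ▸ hOp) hPl hQl) ▸ hpP')
  have hOQ' : O ≠ Q' := fun h =>
    hPnl' ((u_ln hP'Q' hpP' (h ▸ hOp) hP'l' hQ'l') ▸ hpP)
  have hOa : O ∉ a := fun h =>
    (em (a = qq)).elim (fun hq => hQ'na (hq.symm ▸ hqqQ'))
      (fun hq => hOQ (u_pt hq h hOqq haQ hqqQ))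
  have hOa' : O ∉ a' := fun h =>
    (em (a' = qq)).elim (fun hq => hQna' (hq.symm ▸ hqqQ))
      (fun hq => hOQ' (u_pt hq h hOqq ha'Q' hqqQ'))
  have hObq : O ∉ bq := fun h =>
    (em (bq = qq)).elim
      (fun hq => hQ'ab ((u_pt hbqbq' (hq.symm ▸ hqqQ') hbq'Q' hbqB hbq'B) ▸ hB))
      (fun hq => hOQ (u_pt hq h hOqq hbqQ hqqQ))
  have hObq' : O ∉ bq' := fun h =>
    (em (bq' = qq)).elim
      (fun hq => hQab ((u_pt hbqbq'.symm (hq.symm ▸ hqqQ) hbqQ hbq'B hbqB) ▸ hB))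
      (fun hq => hOQ' (u_pt hq h hOqq hbq'Q' hqqQ'))
  -- Final case split and third Desargues application
  by_cases hrsrs' : rs = rs'
  · exact u_pt (show rs ≠ ab from fun h => hRab (h ▸ hrsR)) hrsD hDab
      (hrsrs' ▸ hrs'D') hD'ab
  · have hOrs : O ∉ rs := fun h =>
      (em (rs = rr)).elim
        (fun he =>
          (em (ss = rs)).elim
            (fun he2 => hrsrs'
              (u_ln hS'R'.symm (he.symm ▸ hrrR') (he2 ▸ hssS') hrs'R' hrs'S'))
            (fun he2 => hOS (u_pt he2 hOss h hssS hrsS)))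
        (fun he => hOR (u_pt he h hOrr hrsR hrrR))
    have hOrs' : O ∉ rs' := fun h =>
      (em (rs' = rr)).elim
        (fun he =>
          (em (ss = rs')).elim
            (fun he2 => hrsrs'
              (u_ln hSR.symm hrsR hrsS (he.symm ▸ hrrR) (he2 ▸ hssS)))
            (fun he2 => hOS' (u_pt he2 hOss h hssS' hrs'S')))
        (fun he => hOR' (u_pt he h hOrr hrs'R' hrrR'))
    obtain ⟨ax3, ⟨X3, hX3a, hX3a', hX3m⟩, ⟨Y3, hY3rs, hY3rs', hY3m⟩,
        ⟨Z3, hZ3bq, hZ3bq', hZ3m⟩, -, -, -, -, -, -⟩ :=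
      hdes Q R S Q' R' S' a rs bq a' rs' bq' O
        ⟨haQ, haR, hrsR, hrsS, hbqS, hbqQ, hQrs, hRbq, hSa⟩
        ⟨ha'Q', ha'R', hrs'R', hrs'S', hbq'S', hbq'Q', hQ'rs', hR'bq', hS'a'⟩
        ⟨hQQ', hRR', hSS', haa', hrsrs', hbqbq'⟩
        ⟨⟨qq, hqqQ, hqqQ', hOqq⟩, ⟨rr, hrrR, hrrR', hOrr⟩,
          ⟨ss, hssS, hssS', hOss⟩, hOa, hOrs, hObq, hOa', hOrs', hObq'⟩
    have hX3 : X3 = A := u_pt haa' hX3a hX3a' haA ha'A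
    have hZ3 : Z3 = B := u_pt hbqbq' hZ3bq hZ3bq' hbqB hbq'B
    have hax3 : ax3 = ab := u_ln hAB (hX3 ▸ hX3m) (hZ3 ▸ hZ3m) hA hB
    have hYD : Y3 = D :=
      u_pt (show rs ≠ ab from fun h => hRab (h ▸ hrsR)) hY3rs (hax3 ▸ hY3m)
        hrsD hDab
    have hYD' : Y3 = D' :=
      u_pt (show rs' ≠ ab from fun h => hR'ab (h ▸ hrs'R')) hY3rs'
        (hax3 ▸ hY3m) hrs'D' hD'ab
    exact hYD ▸ hYD'

lemma card3_lt8 {α : Type*} [DecidableEq α] (x1 x2 x3 : α) :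
    ({x1, x2, x3} : Finset α).card < 8 := by
  have h1 := Finset.card_insert_le x1 ({x2, x3} : Finset α)
  have h2 := Finset.card_insert_le x2 ({x3} : Finset α)
  have h3 := Finset.card_singleton x3
  omega

lemma card5_lt8 {α : Type*} [DecidableEq α] (x1 x2 x3 x4 x5 : α) :
    ({x1, x2, x3, x4, x5} : Finset α).card < 8 := by
  have h1 := Finset.card_insert_le x1 ({x2, x3, x4, x5} : Finset α)
  have h2 := Finset.card_insert_le x2 ({x3, x4, x5} : Finset α)
  have h3 := Finset.card_insert_le x3 ({x4, x5} : Finset α)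
  have h4 := Finset.card_insert_le x4 ({x5} : Finset α)
  have h5 := Finset.card_singleton x5
  omega

lemma card6_lt8 {α : Type*} [DecidableEq α] (x1 x2 x3 x4 x5 x6 : α) :
    ({x1, x2, x3, x4, x5, x6} : Finset α).card < 8 := by
  have h1 := Finset.card_insert_le x1 ({x2, x3, x4, x5, x6} : Finset α)
  have h2 := Finset.card_insert_le x2 ({x3, x4, x5, x6} : Finset α)
  have h3 := Finset.card_insert_le x3 ({x4, x5, x6} : Finset α)
  have h4 := Finset.card_insert_le x4 ({x5, x6} : Finset α)
  have h5 := Finset.card_insert_le x5 ({x6} : Finset α)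
  have h6 := Finset.card_singleton x6
  omega

/-- On every line we can find a point avoiding fewer than 8 forbidden points. -/
lemma pick_point (h8 : LinesHaveAtLeast Pt Ln 8) (n : Ln) (bad : Finset Pt)
    (hb : bad.card < 8) : ∃ x : Pt, x ∈ n ∧ x ∉ bad := by
  obtain ⟨s, hcard, hmem⟩ := h8 n
  by_contra hco
  push_neg at hco
  have hsub : s ⊆ bad := fun x hx => hco x (hmem x hx)
  have := Finset.card_le_card hsub
  omega

/-- Through every point we can find a line avoiding fewer than 8 forbidden lines. -/
lemma pick_line (h8 : LinesHaveAtLeast Pt Ln 8) (X : Pt) (bad : Finset Ln)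
    (hb : bad.card < 8) : ∃ n : Ln, X ∈ n ∧ n ∉ bad := by
  classical
  obtain ⟨m, hm⟩ := Configuration.Nondegenerate.exists_line (P := Pt) (L := Ln) X
  obtain ⟨s, hcard, hmem⟩ := h8 m
  set f : Pt → Ln := fun y => if h : X = y then m else mkLine h with hf_def
  have hXf : ∀ y ∈ s, X ∈ f y ∧ y ∈ f y := by
    intro y hy
    have hXy : X ≠ y := fun h => hm (h ▸ hmem y hy)
    simp only [hf_def, dif_neg hXy]
    exact ⟨(mkLine_ax hXy).1, (mkLine_ax hXy).2⟩
  have hinj : Set.InjOn f s := by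
    intro y1 h1 y2 h2 he
    by_contra hne
    obtain ⟨hX1, hy1⟩ := hXf y1 (by exact_mod_cast h1)
    obtain ⟨hX2, hy2⟩ := hXf y2 (by exact_mod_cast h2)
    exact hm ((u_ln hne hy1 (he.symm ▸ hy2) (hmem y1 (by exact_mod_cast h1))
      (hmem y2 (by exact_mod_cast h2))) ▸ hX1)
  by_contra hco
  push_neg at hco
  have hsub : s.image f ⊆ bad := by
    intro t ht
    obtain ⟨y, hy, rfl⟩ := Finset.mem_image.mp ht
    exact hco _ (hXf y hy).1
  have h1 := Finset.card_le_card hsub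
  rw [Finset.card_image_of_injOn hinj] at h1
  omega

/-- Degenerate case `C = A` : the construction yields `D = A`. -/
lemma degenA {A B : Pt} {ab : Ln} (hAB : A ≠ B) (hA : A ∈ ab) (hB : B ∈ ab)
    (l : Ln) (hCl : A ∈ l) (hlab : l ≠ ab)
    (R : Pt) (hRab : R ∉ ab) (hRl : R ∉ l)
    (Pp : Pt) (hP1 : Pp ∈ l) (hP2 : Col Pt Ln B R Pp)
    (Q : Pt) (hQ1 : Q ∈ l) (hQ2 : Col Pt Ln A R Q)
    (S : Pt) (hS1 : Col Pt Ln A Pp S) (hS2 : Col Pt Ln B Q S)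
    (D : Pt) (hD1 : D ∈ ab) (hD2 : Col Pt Ln R S D) : D = A := by
  have hAR : A ≠ R := fun h => hRab (h ▸ hA)
  have hBR : B ≠ R := fun h => hRab (h ▸ hB)
  set a : Ln := mkLine hAR with ha_def
  have haA : A ∈ a := (mkLine_ax hAR).1
  have haR : R ∈ a := (mkLine_ax hAR).2
  have hQa : Q ∈ a := col_mem hQ2 hAR haA haR
  have hal : a ≠ l := fun h => hRl (h ▸ haR)
  have hQA : Q = A := u_pt hal hQa hQ1 haA hCl
  set b : Ln := mkLine hBR with hb_def
  have hbB : B ∈ b := (mkLine_ax hBR).1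
  have hbR : R ∈ b := (mkLine_ax hBR).2
  have hPb : Pp ∈ b := col_mem hP2 hBR hbB hbR
  have hPA : Pp ≠ A := fun h => hRab ((u_ln hAB (h ▸ hPb) hbB hA hB) ▸ hbR)
  have hab_b : ab ≠ b := fun h => hRab (h.symm ▸ hbR)
  have hPab : Pp ∉ ab := fun h =>
    hlab (u_ln hAB hCl ((u_pt hab_b h hPb hB hbB) ▸ hP1) hA hB)
  set ap : Ln := mkLine hPA.symm with hap_def
  have hapA : A ∈ ap := (mkLine_ax hPA.symm).1
  have hapP : Pp ∈ ap := (mkLine_ax hPA.symm).2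
  have hSap : S ∈ ap := col_mem hS1 hPA.symm hapA hapP
  have hap_ab : ap ≠ ab := fun h => hPab (h ▸ hapP)
  have hSab : S ∈ ab := col_mem (hQA ▸ hS2) hAB.symm hB hA
  have hSA : S = A := u_pt hap_ab hSap hSab hapA hA
  have hDa : D ∈ a := col_mem (hSA ▸ hD2) hAR.symm haR haA
  exact u_pt (show a ≠ ab from fun h => hRab (h ▸ haR)) hDa hD1 haA hA

/-- Degenerate case `C = B` : the construction yields `D = B`. -/
lemma degenB {A B : Pt} {ab : Ln} (hAB : A ≠ B) (hA : A ∈ ab) (hB : B ∈ ab)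
    (l : Ln) (hCl : B ∈ l) (hlab : l ≠ ab)
    (R : Pt) (hRab : R ∉ ab) (hRl : R ∉ l)
    (Pp : Pt) (hP1 : Pp ∈ l) (hP2 : Col Pt Ln B R Pp)
    (Q : Pt) (hQ1 : Q ∈ l) (hQ2 : Col Pt Ln A R Q)
    (S : Pt) (hS1 : Col Pt Ln A Pp S) (hS2 : Col Pt Ln B Q S)
    (D : Pt) (hD1 : D ∈ ab) (hD2 : Col Pt Ln R S D) : D = B := by
  have hAR : A ≠ R := fun h => hRab (h ▸ hA)
  have hBR : B ≠ R := fun h => hRab (h ▸ hB)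
  set b : Ln := mkLine hBR with hb_def
  have hbB : B ∈ b := (mkLine_ax hBR).1
  have hbR : R ∈ b := (mkLine_ax hBR).2
  have hPb : Pp ∈ b := col_mem hP2 hBR hbB hbR
  have hbl : b ≠ l := fun h => hRl (h ▸ hbR)
  have hPB : Pp = B := u_pt hbl hPb hP1 hbB hCl
  have hAl : A ∉ l := fun h => hlab (u_ln hAB h hCl hA hB)
  set a : Ln := mkLine hAR with ha_def
  have haA : A ∈ a := (mkLine_ax hAR).1
  have haR : R ∈ a := (mkLine_ax hAR).2
  have hQa : Q ∈ a := col_mem hQ2 hAR haA haR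
  have hab_a : ab ≠ a := fun h => hRab (h.symm ▸ haR)
  have hQab : Q ∉ ab := fun h => hAl ((u_pt hab_a h hQa hA haA) ▸ hQ1)
  have hBQ : B ≠ Q := fun h => hQab (h ▸ hB)
  set bq : Ln := mkLine hBQ with hbq_def
  have hbqB : B ∈ bq := (mkLine_ax hBQ).1
  have hbqQ : Q ∈ bq := (mkLine_ax hBQ).2
  have hSbq : S ∈ bq := col_mem hS2 hBQ hbqB hbqQ
  have hSab : S ∈ ab := col_mem (hPB ▸ hS1) hAB hA hB
  have hSB : S = B := u_pt (show bq ≠ ab from fun h => hQab (h ▸ hbqQ)) hSbq hSab hbqB hB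
  have hDb : D ∈ b := col_mem (hSB ▸ hD2) hBR.symm hbR hbB
  exact u_pt (show b ≠ ab from fun h => hRab (h ▸ hbR)) hDb hD1 hbB hB

end Harm

/-- **Invariance Theorem for harmonic conjugates.** Let `A ≠ B`, let `ab` be the
line `AB`, and let `C` be a point on `ab`. Given two auxiliary selections
`(l, R)` and `(l', R')` — where `l` is a line through `C` distinct from `ab` and
`R` is a point outside both `ab` and `l`, and likewise for `(l', R')` — with
`Pp = BR·l`, `Q = AR·l`, `S = AP·BQ`, `D = AB·RS`, and analogously
`Pp' = BR'·l'`, `Q' = AR'·l'`, `S' = AP'·BQ'`, `D' = AB·R'S'`, we have `D = D'`: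
the harmonic conjugate construction is independent of the choice of auxiliary
elements. -/
theorem harmonic_invariance
    [Configuration.ProjectivePlane P L]
    (hdes : DesarguesProperty P L)
    (h8 : LinesHaveAtLeast P L 8)
    (A B : P) (hAB : A ≠ B) (ab : L) (hA : A ∈ ab) (hB : B ∈ ab)
    (C : P) (hC : C ∈ ab)
    -- first auxiliary selection
    (l : L) (hCl : C ∈ l) (hlab : l ≠ ab)
    (R : P) (hRab : R ∉ ab) (hRl : R ∉ l)
    (Pp : P) (hP1 : Pp ∈ l) (hP2 : Col P L B R Pp)
    (Q : P) (hQ1 : Q ∈ l) (hQ2 : Col P L A R Q)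
    (S : P) (hS1 : Col P L A Pp S) (hS2 : Col P L B Q S)
    (D : P) (hD1 : D ∈ ab) (hD2 : Col P L R S D)
    -- second auxiliary selection
    (l' : L) (hCl' : C ∈ l') (hlab' : l' ≠ ab)
    (R' : P) (hRab' : R' ∉ ab) (hRl' : R' ∉ l')
    (Pp' : P) (hP1' : Pp' ∈ l') (hP2' : Col P L B R' Pp')
    (Q' : P) (hQ1' : Q' ∈ l') (hQ2' : Col P L A R' Q')
    (S' : P) (hS1' : Col P L A Pp' S') (hS2' : Col P L B Q' S')
    (D' : P) (hD1' : D' ∈ ab) (hD2' : Col P L R' S' D') :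
    D = D' := by
  classical
  by_cases hCA : C = A
  · subst hCA
    exact (degenA hAB hA hB l hCl hlab R hRab hRl Pp hP1 hP2 Q hQ1 hQ2 S hS1
        hS2 D hD1 hD2).trans
      (degenA hAB hA hB l' hCl' hlab' R' hRab' hRl' Pp' hP1' hP2' Q' hQ1' hQ2'
        S' hS1' hS2' D' hD1' hD2').symm
  by_cases hCB : C = B
  · subst hCB
    exact (degenB hAB hA hB l hCl hlab R hRab hRl Pp hP1 hP2 Q hQ1 hQ2 S hS1
        hS2 D hD1 hD2).trans
      (degenB hAB hA hB l' hCl' hlab' R' hRab' hRl' Pp' hP1' hP2' Q' hQ1' hQ2'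
        S' hS1' hS2' D' hD1' hD2').symm
  -- main case: extract the derived lines of the two given configurations
  obtain ⟨a1, b1, ap1, bq1, hAl1, hBl1, hPab1, hQab1, ha1A, ha1R, ha1Q, hb1B,
      hb1R, hb1P, hap1A, hap1P, hap1S, hbq1B, hbq1Q, hbq1S⟩ :=
    cfg_lines hAB hA hB hC hCA hCB l hCl hlab R hRab hRl Pp hP1 hP2 Q hQ1 hQ2
      S hS1 hS2 D hD1 hD2
  obtain ⟨a2, b2, ap2, bq2, hAl2, hBl2, hPab2, hQab2, ha2A, ha2R, ha2Q, hb2B,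
      hb2R, hb2P, hap2A, hap2P, hap2S, hbq2B, hbq2Q, hbq2S⟩ :=
    cfg_lines hAB hA hB hC hCA hCB l' hCl' hlab' R' hRab' hRl' Pp' hP1' hP2'
      Q' hQ1' hQ2' S' hS1' hS2' D' hD1' hD2'
  -- choose a third auxiliary line through C
  obtain ⟨l₃, hCl₃, hl₃⟩ := pick_line h8 C {ab, l, l'} (card3_lt8 _ _ _)
  have hl₃ab : l₃ ≠ ab := fun h => hl₃ (by rw [h]; simp)
  have hl₃l : l₃ ≠ l := fun h => hl₃ (by rw [h]; simp)
  have hl₃l' : l₃ ≠ l' := fun h => hl₃ (by rw [h]; simp)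
  have hAl₃ : A ∉ l₃ := fun h => hl₃ab (u_ln hCA hCl₃ h hC hA)
  have hBl₃ : B ∉ l₃ := fun h => hl₃ab (u_ln hCB hCl₃ h hC hB)
  -- auxiliary intersection points relative to the first configuration
  have hapl₃ : ap1 ≠ l₃ := fun h => hAl₃ (h ▸ hap1A)
  obtain ⟨X0, hX0ap, hX0l₃⟩ : ∃ x : P, x ∈ ap1 ∧ x ∈ l₃ :=
    ⟨mkPoint hapl₃, mkPoint_ax hapl₃⟩
  have hBX0 : B ≠ X0 := fun h => hBl₃ (h ▸ hX0l₃)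
  obtain ⟨bx0, hbx0B, hbx0X0⟩ : ∃ m : L, B ∈ m ∧ X0 ∈ m :=
    ⟨mkLine hBX0, mkLine_ax hBX0⟩
  have hbql₃ : bq1 ≠ l₃ := fun h => hBl₃ (h ▸ hbq1B)
  obtain ⟨Y0, hY0bq, hY0l₃⟩ : ∃ x : P, x ∈ bq1 ∧ x ∈ l₃ :=
    ⟨mkPoint hbql₃, mkPoint_ax hbql₃⟩
  have hAY0 : A ≠ Y0 := fun h => hAl₃ (h ▸ hY0l₃)
  obtain ⟨ay0, hay0A, hay0Y0⟩ : ∃ m : L, A ∈ m ∧ Y0 ∈ m :=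
    ⟨mkLine hAY0, mkLine_ax hAY0⟩
  -- auxiliary intersection points relative to the second configuration
  have hapl₃' : ap2 ≠ l₃ := fun h => hAl₃ (h ▸ hap2A)
  obtain ⟨X1, hX1ap, hX1l₃⟩ : ∃ x : P, x ∈ ap2 ∧ x ∈ l₃ :=
    ⟨mkPoint hapl₃', mkPoint_ax hapl₃'⟩
  have hBX1 : B ≠ X1 := fun h => hBl₃ (h ▸ hX1l₃)
  obtain ⟨bx1, hbx1B, hbx1X1⟩ : ∃ m : L, B ∈ m ∧ X1 ∈ m :=
    ⟨mkLine hBX1, mkLine_ax hBX1⟩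
  have hbql₃' : bq2 ≠ l₃ := fun h => hBl₃ (h ▸ hbq2B)
  obtain ⟨Y1, hY1bq, hY1l₃⟩ : ∃ x : P, x ∈ bq2 ∧ x ∈ l₃ :=
    ⟨mkPoint hbql₃', mkPoint_ax hbql₃'⟩
  have hAY1 : A ≠ Y1 := fun h => hAl₃ (h ▸ hY1l₃)
  obtain ⟨ay1, hay1A, hay1Y1⟩ : ∃ m : L, A ∈ m ∧ Y1 ∈ m :=
    ⟨mkLine hAY1, mkLine_ax hAY1⟩
  -- choose a transversal line through A
  obtain ⟨n, hAn, hn⟩ := pick_line h8 A {ab, a1, a2, ay0, ay1}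
    (card5_lt8 _ _ _ _ _)
  have hnab : n ≠ ab := fun h => hn (by rw [h]; simp)
  have hna : n ≠ a1 := fun h => hn (by rw [h]; simp)
  have hna' : n ≠ a2 := fun h => hn (by rw [h]; simp)
  have hnay0 : n ≠ ay0 := fun h => hn (by rw [h]; simp)
  have hnay1 : n ≠ ay1 := fun h => hn (by rw [h]; simp)
  have hBn : B ∉ n := fun h => hnab (u_ln hAB hAn h hA hB)
  have hnb : n ≠ b1 := fun h => hBn (h.symm ▸ hb1B)
  have hnb' : n ≠ b2 := fun h => hBn (h.symm ▸ hb2B)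
  have hnbx0 : n ≠ bx0 := fun h => hBn (h.symm ▸ hbx0B)
  have hnbx1 : n ≠ bx1 := fun h => hBn (h.symm ▸ hbx1B)
  have hnl₃ : n ≠ l₃ := fun h => hAl₃ (h ▸ hAn)
  obtain ⟨Zb, hZbn, hZbb⟩ : ∃ x : P, x ∈ n ∧ x ∈ b1 :=
    ⟨mkPoint hnb, mkPoint_ax hnb⟩
  obtain ⟨Zb', hZb'n, hZb'b⟩ : ∃ x : P, x ∈ n ∧ x ∈ b2 :=
    ⟨mkPoint hnb', mkPoint_ax hnb'⟩
  obtain ⟨Zx, hZxn, hZxb⟩ : ∃ x : P, x ∈ n ∧ x ∈ bx0 :=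
    ⟨mkPoint hnbx0, mkPoint_ax hnbx0⟩
  obtain ⟨Zx', hZx'n, hZx'b⟩ : ∃ x : P, x ∈ n ∧ x ∈ bx1 :=
    ⟨mkPoint hnbx1, mkPoint_ax hnbx1⟩
  obtain ⟨Zl, hZln, hZll₃⟩ : ∃ x : P, x ∈ n ∧ x ∈ l₃ :=
    ⟨mkPoint hnl₃, mkPoint_ax hnl₃⟩
  -- choose the third auxiliary point
  obtain ⟨R₃, hR₃n, hR₃bad⟩ := pick_point h8 n {A, Zb, Zb', Zx, Zx', Zl}
    (card6_lt8 _ _ _ _ _ _)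
  have hR₃A : R₃ ≠ A := fun h => hR₃bad (by rw [h]; simp)
  have hR₃Zb : R₃ ≠ Zb := fun h => hR₃bad (by rw [h]; simp)
  have hR₃Zb' : R₃ ≠ Zb' := fun h => hR₃bad (by rw [h]; simp)
  have hR₃Zx : R₃ ≠ Zx := fun h => hR₃bad (by rw [h]; simp)
  have hR₃Zx' : R₃ ≠ Zx' := fun h => hR₃bad (by rw [h]; simp)
  have hR₃Zl : R₃ ≠ Zl := fun h => hR₃bad (by rw [h]; simp)
  have hR₃ab : R₃ ∉ ab := fun h => hR₃A (u_pt hnab hR₃n h hAn hA)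
  have hR₃l₃ : R₃ ∉ l₃ := fun h => hR₃Zl (u_pt hnl₃ hR₃n h hZln hZll₃)
  have hR₃a : R₃ ∉ a1 := fun h => hR₃A (u_pt hna hR₃n h hAn ha1A)
  have hR₃a' : R₃ ∉ a2 := fun h => hR₃A (u_pt hna' hR₃n h hAn ha2A)
  have hR₃ay0 : R₃ ∉ ay0 := fun h => hR₃A (u_pt hnay0 hR₃n h hAn hay0A)
  have hR₃ay1 : R₃ ∉ ay1 := fun h => hR₃A (u_pt hnay1 hR₃n h hAn hay1A)
  have hR₃b : R₃ ∉ b1 := fun h => hR₃Zb (u_pt hnb hR₃n h hZbn hZbb)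
  have hR₃b' : R₃ ∉ b2 := fun h => hR₃Zb' (u_pt hnb' hR₃n h hZb'n hZb'b)
  have hR₃bx0 : R₃ ∉ bx0 := fun h => hR₃Zx (u_pt hnbx0 hR₃n h hZxn hZxb)
  have hR₃bx1 : R₃ ∉ bx1 := fun h => hR₃Zx' (u_pt hnbx1 hR₃n h hZx'n hZx'b)
  -- build the third configuration
  have hAR₃ : A ≠ R₃ := fun h => hR₃ab (h ▸ hA)
  have hBR₃ : B ≠ R₃ := fun h => hR₃ab (h ▸ hB)
  obtain ⟨a₃, ha₃A, ha₃R₃⟩ : ∃ m : L, A ∈ m ∧ R₃ ∈ m :=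
    ⟨mkLine hAR₃, mkLine_ax hAR₃⟩
  obtain ⟨b₃, hb₃B, hb₃R₃⟩ : ∃ m : L, B ∈ m ∧ R₃ ∈ m :=
    ⟨mkLine hBR₃, mkLine_ax hBR₃⟩
  have hb₃l₃ : b₃ ≠ l₃ := fun h => hR₃l₃ (h ▸ hb₃R₃)
  have ha₃l₃ : a₃ ≠ l₃ := fun h => hR₃l₃ (h ▸ ha₃R₃)
  obtain ⟨P₃, hP₃b₃, hP₃l₃⟩ : ∃ x : P, x ∈ b₃ ∧ x ∈ l₃ :=
    ⟨mkPoint hb₃l₃, mkPoint_ax hb₃l₃⟩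
  obtain ⟨Q₃, hQ₃a₃, hQ₃l₃⟩ : ∃ x : P, x ∈ a₃ ∧ x ∈ l₃ :=
    ⟨mkPoint ha₃l₃, mkPoint_ax ha₃l₃⟩
  have hAP₃ : A ≠ P₃ := fun h => hAl₃ (h ▸ hP₃l₃)
  have hBQ₃ : B ≠ Q₃ := fun h => hBl₃ (h ▸ hQ₃l₃)
  obtain ⟨ap₃, hap₃A, hap₃P₃⟩ : ∃ m : L, A ∈ m ∧ P₃ ∈ m :=
    ⟨mkLine hAP₃, mkLine_ax hAP₃⟩
  obtain ⟨bq₃, hbq₃B, hbq₃Q₃⟩ : ∃ m : L, B ∈ m ∧ Q₃ ∈ m :=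
    ⟨mkLine hBQ₃, mkLine_ax hBQ₃⟩
  have hP₃C : P₃ ≠ C := fun h =>
    hR₃ab ((u_ln (Ne.symm hCB) hb₃B (h ▸ hP₃b₃) hB hC) ▸ hb₃R₃)
  have hap₃bq₃ : ap₃ ≠ bq₃ := fun h =>
    hP₃C (u_pt hl₃ab hP₃l₃
      ((u_ln hAB hap₃A (h.symm ▸ hbq₃B) hA hB) ▸ hap₃P₃) hCl₃ hC)
  obtain ⟨S₃, hS₃ap₃, hS₃bq₃⟩ : ∃ x : P, x ∈ ap₃ ∧ x ∈ bq₃ :=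
    ⟨mkPoint hap₃bq₃, mkPoint_ax hap₃bq₃⟩
  have ha₃b₃ : a₃ ≠ b₃ := fun h =>
    hR₃ab ((u_ln hAB ha₃A (h.symm ▸ hb₃B) hA hB) ▸ ha₃R₃)
  have hP₃R₃ : P₃ ≠ R₃ := fun h => hR₃l₃ (h ▸ hP₃l₃)
  have hR₃S₃ : R₃ ≠ S₃ := fun h =>
    hP₃R₃ (u_pt ha₃b₃
      ((u_ln hAR₃ hap₃A (h.symm ▸ hS₃ap₃) ha₃A ha₃R₃) ▸ hap₃P₃)
      hP₃b₃ ha₃R₃ hb₃R₃)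
  obtain ⟨rs₃, hrs₃R₃, hrs₃S₃⟩ : ∃ m : L, R₃ ∈ m ∧ S₃ ∈ m :=
    ⟨mkLine hR₃S₃, mkLine_ax hR₃S₃⟩
  have hrs₃ab : rs₃ ≠ ab := fun h => hR₃ab (h ▸ hrs₃R₃)
  obtain ⟨D₃, hD₃rs₃, hD₃ab⟩ : ∃ x : P, x ∈ rs₃ ∧ x ∈ ab :=
    ⟨mkPoint hrs₃ab, mkPoint_ax hrs₃ab⟩
  -- genericity between the first and the third configuration
  have G2f : ¬ Col P L A R R₃ := fun hcol => by
    obtain ⟨m, hmA, hmR, hmR₃⟩ := hcol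
    have hm : m = a1 := u_ln (show A ≠ R from fun h => hRab (h.symm ▸ hA))
      hmA hmR ha1A ha1R
    exact hR₃a (hm ▸ hmR₃)
  have G3f : ¬ Col P L B R R₃ := fun hcol => by
    obtain ⟨m, hmB, hmR, hmR₃⟩ := hcol
    have hm : m = b1 := u_ln (show B ≠ R from fun h => hRab (h.symm ▸ hB))
      hmB hmR hb1B hb1R
    exact hR₃b (hm ▸ hmR₃)
  have G5f : ¬ Col P L A Pp P₃ := fun hcol => by
    obtain ⟨m, hmA, hmP, hmP₃⟩ := hcol
    have hm : m = ap1 := u_ln (show A ≠ Pp from fun h => hAl1 (h.symm ▸ hP1))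
      hmA hmP hap1A hap1P
    have h1 : P₃ ∈ ap1 := hm ▸ hmP₃
    have h2 : P₃ = X0 := u_pt hapl₃ h1 hP₃l₃ hX0ap hX0l₃
    have h3 : b₃ = bx0 := u_ln hBX0 hb₃B (h2 ▸ hP₃b₃) hbx0B hbx0X0
    exact hR₃bx0 (h3 ▸ hb₃R₃)
  have G6f : ¬ Col P L B Q Q₃ := fun hcol => by
    obtain ⟨m, hmB, hmQ, hmQ₃⟩ := hcol
    have hm : m = bq1 := u_ln (show B ≠ Q from fun h => hBl1 (h.symm ▸ hQ1))
      hmB hmQ hbq1B hbq1Q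
    have h1 : Q₃ ∈ bq1 := hm ▸ hmQ₃
    have h2 : Q₃ = Y0 := u_pt hbql₃ h1 hQ₃l₃ hY0bq hY0l₃
    have h3 : a₃ = ay0 := u_ln hAY0 ha₃A (h2 ▸ hQ₃a₃) hay0A hay0Y0
    exact hR₃ay0 (h3 ▸ ha₃R₃)
  -- genericity between the second and the third configuration
  have G2g : ¬ Col P L A R' R₃ := fun hcol => by
    obtain ⟨m, hmA, hmR, hmR₃⟩ := hcol
    have hm : m = a2 := u_ln (show A ≠ R' from fun h => hRab' (h.symm ▸ hA))
      hmA hmR ha2A ha2R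
    exact hR₃a' (hm ▸ hmR₃)
  have G3g : ¬ Col P L B R' R₃ := fun hcol => by
    obtain ⟨m, hmB, hmR, hmR₃⟩ := hcol
    have hm : m = b2 := u_ln (show B ≠ R' from fun h => hRab' (h.symm ▸ hB))
      hmB hmR hb2B hb2R
    exact hR₃b' (hm ▸ hmR₃)
  have G5g : ¬ Col P L A Pp' P₃ := fun hcol => by
    obtain ⟨m, hmA, hmP, hmP₃⟩ := hcol
    have hm : m = ap2 := u_ln (show A ≠ Pp' from fun h => hAl2 (h.symm ▸ hP1'))
      hmA hmP hap2A hap2P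
    have h1 : P₃ ∈ ap2 := hm ▸ hmP₃
    have h2 : P₃ = X1 := u_pt hapl₃' h1 hP₃l₃ hX1ap hX1l₃
    have h3 : b₃ = bx1 := u_ln hBX1 hb₃B (h2 ▸ hP₃b₃) hbx1B hbx1X1
    exact hR₃bx1 (h3 ▸ hb₃R₃)
  have G6g : ¬ Col P L B Q' Q₃ := fun hcol => by
    obtain ⟨m, hmB, hmQ, hmQ₃⟩ := hcol
    have hm : m = bq2 := u_ln (show B ≠ Q' from fun h => hBl2 (h.symm ▸ hQ1'))
      hmB hmQ hbq2B hbq2Q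
    have h1 : Q₃ ∈ bq2 := hm ▸ hmQ₃
    have h2 : Q₃ = Y1 := u_pt hbql₃' h1 hQ₃l₃ hY1bq hY1l₃
    have h3 : a₃ = ay1 := u_ln hAY1 ha₃A (h2 ▸ hQ₃a₃) hay1A hay1Y1
    exact hR₃ay1 (h3 ▸ ha₃R₃)
  -- conclude by applying the core lemma twice
  exact (coreD hdes hAB hA hB hC hCA hCB
      (mkCfgF hAB hA hB hC hCA hCB l hCl hlab R hRab hRl Pp hP1 hP2 Q hQ1 hQ2
        S hS1 hS2 D hD1 hD2)
      (mkCfgF hAB hA hB hC hCA hCB l₃ hCl₃ hl₃ab R₃ hR₃ab hR₃l₃ P₃ hP₃l₃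
        ⟨b₃, hb₃B, hb₃R₃, hP₃b₃⟩ Q₃ hQ₃l₃ ⟨a₃, ha₃A, ha₃R₃, hQ₃a₃⟩ S₃
        ⟨ap₃, hap₃A, hap₃P₃, hS₃ap₃⟩ ⟨bq₃, hbq₃B, hbq₃Q₃, hS₃bq₃⟩ D₃ hD₃ab
        ⟨rs₃, hrs₃R₃, hrs₃S₃, hD₃rs₃⟩)
      (fun h => hl₃l h.symm) G2f G3f G5f G6f).trans
    (coreD hdes hAB hA hB hC hCA hCB
      (mkCfgF hAB hA hB hC hCA hCB l' hCl' hlab' R' hRab' hRl' Pp' hP1' hP2'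
        Q' hQ1' hQ2' S' hS1' hS2' D' hD1' hD2')
      (mkCfgF hAB hA hB hC hCA hCB l₃ hCl₃ hl₃ab R₃ hR₃ab hR₃l₃ P₃ hP₃l₃
        ⟨b₃, hb₃B, hb₃R₃, hP₃b₃⟩ Q₃ hQ₃l₃ ⟨a₃, ha₃A, ha₃R₃, hQ₃a₃⟩ S₃
        ⟨ap₃, hap₃A, hap₃P₃, hS₃ap₃⟩ ⟨bq₃, hbq₃B, hbq₃Q₃, hS₃bq₃⟩ D₃ hD₃ab
        ⟨rs₃, hrs₃R₃, hrs₃S₃, hD₃rs₃⟩)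
      (fun h => hl₃l' h.symm) G2g G3g G5g G6g).symm
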